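/- Let f : X → 𝒢(Z,C) be a convex function and x₀ ∈ dom f. If x₀ solves the scalarized Stampacchia inequality (svi_M): f(x₀) = Z, or for all x ∈ dom f with f(x) ≠ f(x₀) there exists z* ∈ C⁻∖{0} with 0 < φ′_{f,z*}(x₀, x−x₀), then x₀ solves the set-valued Stampacchia inequality (SVI_M): f(x₀) = Z, or for all x ∈ dom f with f(x) ≠ f(x₀) one has 0 ∉ f′(x₀, x−x₀). If additionally the weak regularity condition holds, namely f′(x₀, x−x₀) = ⋂_{z*∈C⁻∖{0}} {z ∈ Z : φ′_{f,z*}(x₀, x−x₀) ≤ −z*(z)} for all x ∈ X, then x₀ solves (SVI_M) if and only if it solves (svi_M). -/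

import Mathlib

open Set Pointwise

noncomputable section

variable {Z : Type*} [AddCommGroup Z] [Module ℝ Z] [TopologicalSpace Z]

/-- The inf-residual `A ⊖ B = {z : B + {z} ⊆ A}`. -/
def resid (A B : Set Z) : Set Z := {z : Z | B + {z} ⊆ A}

/-- The recession cone `0⁺A`, with the convention `0⁺∅ = ∅`. -/
def recCone (A : Set Z) : Set Z := {z : Z | A.Nonempty ∧ A + {z} ⊆ A}

/-- `A ⊕ B = cl (A + B)`. -/
def oplus (A B : Set Z) : Set Z := closure (A + B)

/-- Membership in `𝒢(Z,C)`: `A = cl co (A + C)`. -/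
def IsG (C A : Set Z) : Prop := A = closure (convexHull ℝ (A + C))

/-- The set `C⁻ \ {0}` of nonzero elements of the negative dual cone. -/
def negDualNZ (C : Set Z) : Set (Z →L[ℝ] ℝ) :=
  {p : Z →L[ℝ] ℝ | (∀ c ∈ C, p c ≤ 0) ∧ p ≠ 0}

/-- `inf {-z*(z) : z ∈ A}` as an extended real. -/
def scal (p : Z →L[ℝ] ℝ) (A : Set Z) : EReal :=
  sInf ((fun z => ((-(p z) : ℝ) : EReal)) '' A)

/-- Support function `σ(z*|A) = sup {z*(z) : z ∈ A}` as an extended real. -/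
def suppF (p : Z →L[ℝ] ℝ) (A : Set Z) : EReal :=
  sSup ((fun z => ((p z : ℝ) : EReal)) '' A)

/-- Inf-residuation on the extended reals: `r ⊖ s = inf {t ∈ ℝ : r ≤ s + t}`. -/
def eresid (r s : EReal) : EReal :=
  sInf ((fun t : ℝ => (t : EReal)) '' {t : ℝ | r ≤ s + (t : EReal)})

variable {X : Type*} [AddCommGroup X] [Module ℝ X]

/-- The scalarization `φ_{f,z*}(x) = inf {-z*(z) : z ∈ f(x)}`. -/
def phi (f : X → Set Z) (p : Z →L[ℝ] ℝ) (x : X) : EReal := scal p (f x)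

/-- Convexity for set-valued functions:
`f(t x₁ + (1-t) x₂) ⊇ cl (t f(x₁) + (1-t) f(x₂))`. -/
def ConvexSV (f : X → Set Z) : Prop :=
  ∀ x₁ x₂ : X, ∀ t : ℝ, t ∈ Ioo (0:ℝ) 1 →
    closure (t • f x₁ + (1 - t) • f x₂) ⊆ f (t • x₁ + (1 - t) • x₂)

/-- The set-valued directional derivative
`f′(x,u) = ⋂_{t₀>0} cl co ⋃_{0<t<t₀} (1/t)•(f(x+tu) ⊖ f(x))`. -/
def sder (f : X → Set Z) (x u : X) : Set Z :=
  ⋂ t₀ ∈ Ioi (0:ℝ), closure (convexHull ℝ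
    (⋃ t ∈ Ioo (0:ℝ) t₀, (1 / t) • resid (f (x + t • u)) (f x)))

/-- The scalar Dini derivative `φ′_{f,z*}(x,u) = inf_{t>0} (1/t)(φ(x+tu) ⊖ φ(x))`. -/
def phiDer (f : X → Set Z) (p : Z →L[ℝ] ℝ) (x u : X) : EReal :=
  ⨅ t ∈ Ioi (0:ℝ), (((1 / t : ℝ)) : EReal) * eresid (phi f p (x + t • u)) (phi f p x)

end


/-- Key scalarization inequality: any element of the set-valued derivative
bounds the scalar Dini derivative. -/
theorem phiDer_le_of_mem_sder
  {Z : Type*} [AddCommGroup Z] [Module ℝ Z] [TopologicalSpace Z]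
  [IsTopologicalAddGroup Z] [ContinuousSMul ℝ Z]
  {X : Type*} [AddCommGroup X] [Module ℝ X]
  (f : X → Set Z) (p : Z →L[ℝ] ℝ) (x₀ u : X) (hx₀ : (f x₀).Nonempty)
  {z : Z} (hz : z ∈ sder f x₀ u) :
    phiDer f p x₀ u ≤ ((-(p z) : ℝ) : EReal) := by
  set D := phiDer f p x₀ u with hD
  set S : Set Z := {w : Z | D ≤ ((-(p w) : ℝ) : EReal)} with hS
  -- every element of the difference quotients lies in S
  have hU : (⋃ t ∈ Ioo (0:ℝ) 1, (1 / t) • resid (f (x₀ + t • u)) (f x₀)) ⊆ S := by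
    rintro w hw
    simp only [mem_iUnion] at hw
    obtain ⟨t, ht, hw⟩ := hw
    obtain ⟨v, hv, rfl⟩ := hw
    have ht0 : (0:ℝ) < t := ht.1
    have hvres : f x₀ + {v} ⊆ f (x₀ + t • u) := hv
    set c : ℝ := -(p v) with hc
    -- phi (x₀ + t u) ≤ phi x₀ + c
    have h1 : phi f p (x₀ + t • u) ≤ phi f p x₀ + (c : EReal) := by
      rw [← EReal.sub_le_iff_le_add (by simp) (by simp)]
      refine le_sInf ?_
      rintro e ⟨a, ha, rfl⟩
      rw [EReal.sub_le_iff_le_add (by simp) (by simp)]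
      have hmem : a + v ∈ f (x₀ + t • u) := hvres (add_mem_add ha rfl)
      have : phi f p (x₀ + t • u) ≤ ((-(p (a + v)) : ℝ) : EReal) :=
        sInf_le ⟨a + v, hmem, rfl⟩
      refine this.trans_eq ?_
      rw [← EReal.coe_add]
      congr 1
      simp [hc, map_add]
      ring
    have h2 : eresid (phi f p (x₀ + t • u)) (phi f p x₀) ≤ (c : EReal) :=
      sInf_le ⟨c, h1, rfl⟩
    have h3 : D ≤ (((1 / t : ℝ)) : EReal) *
        eresid (phi f p (x₀ + t • u)) (phi f p x₀) :=
      iInf₂_le t (mem_Ioi.2 ht0)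
    have hpw : -(p ((1 / t) • v)) = c / t := by
      rw [map_smul]; simp [hc]; ring
    refine mem_setOf.2 ?_
    rw [hpw]
    revert h2 h3
    generalize eresid (phi f p (x₀ + t • u)) (phi f p x₀) = e
    intro h2 h3
    refine h3.trans ?_
    induction e with
    | bot =>
        rw [EReal.coe_mul_bot_of_pos (by positivity)]
        exact bot_le
    | top => simp at h2
    | coe r =>
        rw [← EReal.coe_mul, EReal.coe_le_coe_iff]
        have hr : r ≤ c := EReal.coe_le_coe_iff.1 h2
        have hct : c / t = (1 / t) * c := by ring
        rw [hct]
        exact mul_le_mul_of_nonneg_left hr (by positivity)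
  have hSconv : Convex ℝ S := by
    intro z₁ h₁ z₂ h₂ a b ha hb hab
    have hmin : min (-(p z₁)) (-(p z₂)) ≤ a * -(p z₁) + b * -(p z₂) :=
      Convex.min_le_combo _ _ ha hb hab
    have : -(p (a • z₁ + b • z₂)) = a * -(p z₁) + b * -(p z₂) := by
      simp [map_add, map_smul]; ring
    refine mem_setOf.2 ?_
    rw [this]
    calc D ≤ ((min (-(p z₁)) (-(p z₂)) : ℝ) : EReal) := by
              rcases min_cases (-(p z₁)) (-(p z₂)) with ⟨h, _⟩ | ⟨h, _⟩ <;> rw [h]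
              · exact h₁
              · exact h₂
      _ ≤ _ := EReal.coe_le_coe_iff.2 hmin
  have hSclosed : IsClosed S := by
    have : S = (fun w : Z => -(p w)) ⁻¹' {r : ℝ | D ≤ (r : EReal)} := rfl
    rw [this]
    refine IsClosed.preimage (p.continuous.neg) ?_
    have : {r : ℝ | D ≤ (r : EReal)} = ((↑) : ℝ → EReal) ⁻¹' Ici D := rfl
    rw [this]
    exact isClosed_Ici.preimage continuous_coe_real_ereal
  have hz1 := mem_iInter₂.1 hz 1 (mem_Ioi.2 one_pos)
  exact closure_minimal (convexHull_min hU hSconv) hSclosed hz1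


theorem stmt_14
  {Z : Type*} [AddCommGroup Z] [Module ℝ Z] [TopologicalSpace Z]
  [IsTopologicalAddGroup Z] [ContinuousSMul ℝ Z] [LocallyConvexSpace ℝ Z] [T2Space Z]
  {X : Type*} [AddCommGroup X] [Module ℝ X]
  (C : Set Z) (hCclosed : IsClosed C) (hCconv : Convex ℝ C)
  (hCcone : ∀ c ∈ C, ∀ r : ℝ, 0 < r → r • c ∈ C) (hC0 : (0:Z) ∈ C)
  (hdual : (negDualNZ C).Nonempty)
  (f : X → Set Z) (hG : ∀ x, IsG C (f x)) (hf : ConvexSV f)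
  (x₀ : X) (hx₀ : (f x₀).Nonempty) :
    ((f x₀ = univ ∨ ∀ x : X, (f x).Nonempty → f x ≠ f x₀ →
      ∃ p ∈ negDualNZ C, (0:EReal) < phiDer f p x₀ (x - x₀)) → (f x₀ = univ ∨ ∀ x : X, (f x).Nonempty → f x ≠ f x₀ →
      (0:Z) ∉ sder f x₀ (x - x₀)))
    ∧ ((∀ x : X, sder f x₀ (x - x₀)
      = ⋂ p ∈ negDualNZ C, {z : Z | phiDer f p x₀ (x - x₀) ≤ ((-(p z) : ℝ) : EReal)}) → ((f x₀ = univ ∨ ∀ x : X, (f x).Nonempty → f x ≠ f x₀ →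
      (0:Z) ∉ sder f x₀ (x - x₀)) ↔ (f x₀ = univ ∨ ∀ x : X, (f x).Nonempty → f x ≠ f x₀ →
      ∃ p ∈ negDualNZ C, (0:EReal) < phiDer f p x₀ (x - x₀)))) := by
  have key : ∀ p : Z →L[ℝ] ℝ, ∀ x : X, (0:Z) ∈ sder f x₀ (x - x₀) →
      phiDer f p x₀ (x - x₀) ≤ 0 := by
    intro p x h0
    have := phiDer_le_of_mem_sder f p x₀ (x - x₀) hx₀ h0
    simpa using this
  have impl : (f x₀ = univ ∨ ∀ x : X, (f x).Nonempty → f x ≠ f x₀ →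
      ∃ p ∈ negDualNZ C, (0:EReal) < phiDer f p x₀ (x - x₀)) →
      (f x₀ = univ ∨ ∀ x : X, (f x).Nonempty → f x ≠ f x₀ →
        (0:Z) ∉ sder f x₀ (x - x₀)) := by
    rintro (h | h)
    · exact Or.inl h
    · refine Or.inr fun x hx hne h0 => ?_
      obtain ⟨p, hp, hpos⟩ := h x hx hne
      exact absurd (key p x h0) (not_le.2 hpos)
  refine ⟨impl, fun hWR => ⟨?_, impl⟩⟩
  rintro (h | h)
  · exact Or.inl h
  · refine Or.inr fun x hx hne => ?_
    have h0 := h x hx hne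
    rw [hWR x] at h0
    simp only [mem_iInter, mem_setOf_eq, not_forall] at h0
    obtain ⟨p, hp, hlt⟩ := h0
    refine ⟨p, hp, ?_⟩
    have : ¬ phiDer f p x₀ (x - x₀) ≤ ((-(p 0) : ℝ) : EReal) := hlt
    simpa using not_le.1 this
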